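/- arXiv:1812.02452 — 4 statements merged into one kernel-verified Lean document; each statement's English description precedes it below -/
import Mathlib

section
/- Let A be a k-linear abelian category, G a finite group, and H ≤ G. If the image of the index |G:H| in k is zero, then Triv_G ∘ Ind_H^G = 0, i.e., for every H-object X in A, the image of the natural morphism H^0(G, Ind_H^G X) → H_0(G, Ind_H^G X) is zero. -/
open CategoryTheory CategoryTheory.Limits

universe v u

/-- The category `Rep(G, A)` of `G`-objects in a category `A`, i.e. functors `G → A`
where the group `G` is viewed as a one-object category. -/
abbrev GRep (A : Type u) [Category.{v} A] (G : Type*) [Monoid G] := SingleObj G ⥤ A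

/-- The embedding `A → Rep(G, A)` equipping an object with the trivial `G`-action. -/
abbrev trivialRep (A : Type u) [Category.{v} A] (G : Type*) [Monoid G] :
    A ⥤ GRep A G :=
  Functor.const (SingleObj G)

/-- Restriction `Rep(G, A) → Rep(H, A)` along a monoid homomorphism `f : H →* G`. -/
def resHom (A : Type u) [Category.{v} A] {G H : Type*} [Monoid G] [Monoid H] (f : H →* G) :
    GRep A G ⥤ GRep A H :=
  (Functor.whiskeringLeft _ _ A).obj (SingleObj.mapHom H G f)

attribute [local instance] CategoryTheory.Abelian.hasFiniteBiproducts

section Perm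
variable {A : Type u} [Category.{v} A] [Abelian A]
variable {G : Type*} [Group G] [Finite G] (H : Subgroup G) (W : A)

noncomputable def cosetEquiv : G ⧸ H ≃ Fin H.index := Finite.equivFin _

noncomputable abbrev permObj : A := ⨁ (fun _ : Fin H.index => W)

noncomputable def permMap (g : G) : permObj H W ⟶ permObj H W :=
  biproduct.lift fun i => biproduct.π _ (cosetEquiv H ((g⁻¹ • (cosetEquiv H).symm i : G ⧸ H)))

lemma permMap_π (g : G) (i : Fin H.index) :
    permMap H W g ≫ biproduct.π _ i = biproduct.π _ (cosetEquiv H (g⁻¹ • (cosetEquiv H).symm i)) :=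
  biproduct.lift_π _ _

lemma ι_π (i j : Fin H.index) :
    biproduct.ι (fun _ : Fin H.index => W) i ≫ biproduct.π _ j
      = if i = j then 𝟙 W else 0 := by
  rcases eq_or_ne i j with h | h
  · subst h; rw [biproduct.ι_π_self, if_pos rfl]
  · rw [biproduct.ι_π_ne _ h, if_neg h]

lemma ι_permMap (i : Fin H.index) (g : G) :
    biproduct.ι (fun _ : Fin H.index => W) i ≫ permMap H W g
      = biproduct.ι (fun _ : Fin H.index => W) (cosetEquiv H (g • (cosetEquiv H).symm i)) := by
  ext j
  rw [Category.assoc, permMap_π, ι_π, ι_π]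
  congr 1
  simp only [eq_iff_iff]
  constructor
  · rintro rfl; simp
  · intro h
    have : ((cosetEquiv H).symm i) = g⁻¹ • (cosetEquiv H).symm j := by
      have := congrArg (cosetEquiv H).symm h
      simp only [Equiv.symm_apply_apply] at this
      rw [← this]; simp
    rw [← this]; simp

noncomputable abbrev permFunctor : GRep A G where
  obj _ := permObj H W
  map g := permMap H W g
  map_id _ := by
    show permMap H W 1 = 𝟙 (permObj H W)
    ext j
    rw [permMap_π]
    simp
  map_comp {x y z} f g := by
    show permMap H W (g * f) = permMap H W f ≫ permMap H W g
    ext j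
    rw [permMap_π, Category.assoc, permMap_π, permMap_π]
    congr 2
    simp [mul_smul]

end Perm

section Main
variable {A : Type u} [Category.{v} A] [Abelian A]
variable {G : Type*} [Group G] [Finite G] (H : Subgroup G)

theorem triv_unit_counit_zero {k : Type*} [Field k] [Linear k A]
    (hindex : ((H.index : k) = 0))
    (ind : GRep A ↥H ⥤ GRep A G)
    (adj₁ : ind ⊣ resHom A H.subtype) (adj₂ : resHom A H.subtype ⊣ ind) (W : A) :
    adj₂.unit.app ((trivialRep A G).obj W) ≫ adj₁.counit.app ((trivialRep A G).obj W) = 0 := by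
  classical
  let T := trivialRep A G
  let res := resHom A H.subtype
  let TW := T.obj W
  let Y := res.obj TW
  let M := ind.obj Y
  let P := permObj H W
  let PF : GRep A G := permFunctor H W
  let starG := SingleObj.star G
  let starH := SingleObj.star ↥H
  let Mo := M.obj starG
  let ρ : G → (Mo ⟶ Mo) := fun g => M.map g
  have hρ : ∀ a b : G, ρ (a * b) = ρ b ≫ ρ a := fun a b =>
    M.map_comp (X := starG) (Y := starG) (Z := starG) b a
  let u1 := adj₁.unit.app Y
  let u10 : W ⟶ Mo := u1.app starH
  have hu1 : ∀ g : G, g ∈ H → u10 ≫ ρ g = u10 := by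
    intro g hg
    have h := u1.naturality (show starH ⟶ starH from ⟨g, hg⟩)
    have h2 : 𝟙 W ≫ u10 = u10 ≫ ρ g := h
    rw [Category.id_comp] at h2
    exact h2.symm
  let c1 : G ⧸ H := ((1 : G) : G ⧸ H)
  have hmemc1 : ∀ g : G, g ∈ H → (g : G ⧸ H) = c1 := by
    intro g hg
    apply QuotientGroup.eq.mpr
    simpa using H.inv_mem hg
  -- the H-map Y ⟶ res PF picking out the identity coset
  have hjnat : ∀ (x y : SingleObj ↥H) (f : x ⟶ y),
      Y.map f ≫ biproduct.ι (fun _ : Fin H.index => W) (cosetEquiv H c1)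
        = biproduct.ι (fun _ : Fin H.index => W) (cosetEquiv H c1) ≫ (res.obj PF).map f := by
    intro x y f
    show 𝟙 W ≫ biproduct.ι (fun _ : Fin H.index => W) (cosetEquiv H c1)
        = biproduct.ι (fun _ : Fin H.index => W) (cosetEquiv H c1) ≫ permMap H W ((show ↥H from f : ↥H) : G)
    rw [Category.id_comp, ι_permMap]
    have hfix : (((show ↥H from f : ↥H) : G) • (cosetEquiv H).symm (cosetEquiv H c1)) = c1 := by
      rw [Equiv.symm_apply_apply]
      have h1 : (((show ↥H from f : ↥H) : G) • c1)
          = ((((show ↥H from f : ↥H) : G) * 1 : G) : G ⧸ H) := rfl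
      rw [h1, mul_one]
      exact hmemc1 _ (show ↥H from f).2
    rw [hfix]
  let j : Y ⟶ res.obj PF :=
    { app := fun _ => biproduct.ι (fun _ : Fin H.index => W) (cosetEquiv H c1)
      naturality := hjnat }
  let α : M ⟶ PF := (adj₁.homEquiv Y PF).symm j
  have hαt : adj₁.unit.app Y ≫ (resHom A H.subtype).map α = j := by
    have h := (adj₁.homEquiv Y PF).apply_symm_apply j
    rwa [Adjunction.homEquiv_unit] at h
  have hα : u10 ≫ α.app starG = biproduct.ι (fun _ : Fin H.index => W) (cosetEquiv H c1) := by
    have h := congrArg (fun t : NatTrans Y ((resHom A H.subtype).obj PF) => t.app starH) hαt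
    exact h
  have hαe : ∀ g : G, ρ g ≫ α.app starG = α.app starG ≫ permMap H W g := fun g =>
    α.naturality (show starG ⟶ starG from g)
  -- the norm map β : PF ⟶ M
  let β0 : P ⟶ Mo :=
    ∑ i : Fin H.index,
      biproduct.π (fun _ : Fin H.index => W) i ≫ u10 ≫ ρ (Quotient.out ((cosetEquiv H).symm i))
  have hβ0 : β0 = ∑ i : Fin H.index,
      biproduct.π (fun _ : Fin H.index => W) i ≫ u10 ≫ ρ (Quotient.out ((cosetEquiv H).symm i)) := rfl
  have key : ∀ (g : G) (c : G ⧸ H),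
      u10 ≫ ρ (Quotient.out (g • c)) = u10 ≫ ρ (g * Quotient.out c) := by
    intro g c
    have hmem : (g * Quotient.out c)⁻¹ * Quotient.out (g • c) ∈ H := by
      rw [← QuotientGroup.eq]
      calc ((g * Quotient.out c : G) : G ⧸ H) = g • ((Quotient.out c : G) : G ⧸ H) := rfl
        _ = g • c := by rw [QuotientGroup.out_eq']
        _ = ((Quotient.out (g • c) : G) : G ⧸ H) := (QuotientGroup.out_eq' _).symm
    have hdecomp : Quotient.out (g • c)
        = (g * Quotient.out c) * ((g * Quotient.out c)⁻¹ * Quotient.out (g • c)) :=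
      (mul_inv_cancel_left _ _).symm
    rw [hdecomp, hρ, ← Category.assoc, hu1 _ hmem]
  have hβnat : ∀ g : G, permMap H W g ≫ β0 = β0 ≫ ρ g := by
    intro g
    have hL : permMap H W g ≫ β0
        = ∑ i : Fin H.index,
            biproduct.π (fun _ : Fin H.index => W) (cosetEquiv H (g⁻¹ • (cosetEquiv H).symm i)) ≫ u10 ≫
              ρ (Quotient.out ((cosetEquiv H).symm i)) := by
      rw [hβ0, Preadditive.comp_sum]
      refine Finset.sum_congr rfl fun i _ => ?_
      rw [← Category.assoc, permMap_π]
    have hR : β0 ≫ ρ g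
        = ∑ i : Fin H.index,
            biproduct.π (fun _ : Fin H.index => W) i ≫ u10 ≫
              ρ (g * Quotient.out ((cosetEquiv H).symm i)) := by
      rw [hβ0, Preadditive.sum_comp]
      refine Finset.sum_congr rfl fun i _ => ?_
      rw [hρ]
      simp only [Category.assoc]
    rw [hL, hR]
    refine Fintype.sum_equiv (Equiv.trans (cosetEquiv H).symm (Equiv.trans (MulAction.toPerm g⁻¹) (cosetEquiv H)))
      _ _ fun x => ?_
    simp only [Equiv.trans_apply, Equiv.symm_apply_apply, MulAction.toPerm_apply]
    have hk := key g (g⁻¹ • (cosetEquiv H).symm x)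
    rw [smul_inv_smul] at hk
    rw [hk]
  let β : PF ⟶ M := { app := fun _ => β0, naturality := fun x y f => hβnat f }
  have hβι : ∀ i : Fin H.index,
      biproduct.ι (fun _ : Fin H.index => W) i ≫ β0
        = u10 ≫ ρ (Quotient.out ((cosetEquiv H).symm i)) := by
    intro i
    rw [hβ0, Preadditive.comp_sum]
    rw [Finset.sum_eq_single i]
    · rw [← Category.assoc, biproduct.ι_π_self, Category.id_comp]
    · intro b _ hb
      rw [← Category.assoc, biproduct.ι_π_ne _ (Ne.symm hb), zero_comp]
    · intro hi; exact absurd (Finset.mem_univ i) hi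
  have houtc1 : Quotient.out c1 ∈ H := by
    have h := QuotientGroup.eq.mp ((QuotientGroup.out_eq' c1).symm : c1 = _)
    simpa using h
  have hαβ : α ≫ β = 𝟙 M := by
    apply (adj₁.homEquiv Y M).injective
    rw [Adjunction.homEquiv_unit, Adjunction.homEquiv_unit]
    ext x
    show u10 ≫ α.app starG ≫ β0 = u10 ≫ 𝟙 Mo
    rw [← Category.assoc, hα, hβι, Equiv.symm_apply_apply, hu1 _ houtc1, Category.comp_id]
  have hβα : β ≫ α = 𝟙 PF := by
    refine NatTrans.ext (funext fun x => ?_)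
    show β0 ≫ α.app starG = 𝟙 P
    rw [hβ0, Preadditive.sum_comp]
    have hterm : ∀ i : Fin H.index,
        (biproduct.π (fun _ : Fin H.index => W) i ≫ u10 ≫ ρ (Quotient.out ((cosetEquiv H).symm i))) ≫
            α.app starG
          = biproduct.π (fun _ : Fin H.index => W) i ≫ biproduct.ι (fun _ : Fin H.index => W) i := by
      intro i
      simp only [Category.assoc]
      rw [hαe, ← Category.assoc u10, hα, ι_permMap]
      congr 2
      rw [Equiv.symm_apply_apply]
      have : (Quotient.out ((cosetEquiv H).symm i) • c1) = ((Quotient.out ((cosetEquiv H).symm i) * 1 : G) : G ⧸ H) := rfl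
      rw [this, mul_one, QuotientGroup.out_eq']
      simp
    rw [Finset.sum_congr rfl fun i _ => hterm i, biproduct.total]
  -- assemble: pass to components
  let u20 : W ⟶ Mo := (adj₂.unit.app TW).app starG
  have hu20 : ∀ g : G, u20 ≫ ρ g = u20 := by
    intro g
    have h := (adj₂.unit.app TW).naturality (show starG ⟶ starG from g)
    have h2 : 𝟙 W ≫ u20 = u20 ≫ ρ g := h
    rw [Category.id_comp] at h2
    exact h2.symm
  let c10 : Mo ⟶ W := (adj₁.counit.app TW).app starG
  have hc10 : ∀ g : G, ρ g ≫ c10 = c10 := by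
    intro g
    have h := (adj₁.counit.app TW).naturality (show starG ⟶ starG from g)
    have h2 : ρ g ≫ c10 = c10 ≫ 𝟙 W := h
    rw [Category.comp_id] at h2
    exact h2
  have hαβ0 : α.app starG ≫ β0 = 𝟙 Mo := by
    have h := congrArg (fun t : NatTrans M M => t.app starG) hαβ
    exact h
  ext x
  show u20 ≫ c10 = (0 : W ⟶ W)
  let A0 : W ⟶ P := u20 ≫ α.app starG
  let B0 : P ⟶ W := β0 ≫ c10
  have hA0 : ∀ g : G, A0 ≫ permMap H W g = A0 := by
    intro g
    show (u20 ≫ α.app starG) ≫ permMap H W g = _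
    rw [Category.assoc, ← hαe, ← Category.assoc, hu20]
  have hB0 : ∀ g : G, permMap H W g ≫ B0 = B0 := by
    intro g
    show permMap H W g ≫ (β0 ≫ c10) = _
    rw [← Category.assoc, hβnat, Category.assoc, hc10]
  have hstart : u20 ≫ c10 = A0 ≫ B0 := by
    show _ = (u20 ≫ α.app starG) ≫ (β0 ≫ c10)
    rw [Category.assoc, ← Category.assoc (α.app starG), hαβ0, Category.id_comp]
  rw [hstart]
  have hone : A0 ≫ B0
      = ∑ i : Fin H.index, A0 ≫
          (biproduct.π (fun _ : Fin H.index => W) i ≫ biproduct.ι (fun _ : Fin H.index => W) i) ≫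
            B0 := by
    conv_lhs => rw [show A0 ≫ B0 = A0 ≫ 𝟙 P ≫ B0 from by rw [Category.id_comp]]
    rw [← biproduct.total, Preadditive.sum_comp, Preadditive.comp_sum]
  have hterm : ∀ i : Fin H.index,
      A0 ≫
          (biproduct.π (fun _ : Fin H.index => W) i ≫ biproduct.ι (fun _ : Fin H.index => W) i) ≫
            B0
        = A0 ≫
            (biproduct.π (fun _ : Fin H.index => W) (cosetEquiv H c1) ≫
              biproduct.ι (fun _ : Fin H.index => W) (cosetEquiv H c1)) ≫ B0 := by
    intro i
    have hcgen : ∀ c : G ⧸ H, (Quotient.out c)⁻¹ • c = c1 := by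
      intro c
      calc (Quotient.out c)⁻¹ • c
          = (Quotient.out c)⁻¹ • (((Quotient.out c : G)) : G ⧸ H) := by
            rw [QuotientGroup.out_eq']
        _ = (((Quotient.out c)⁻¹ * Quotient.out c : G) : G ⧸ H) := rfl
        _ = c1 := by rw [inv_mul_cancel]
    have hc := hcgen ((cosetEquiv H).symm i)
    have h1 : A0 ≫ biproduct.π (fun _ : Fin H.index => W) i
        = A0 ≫ biproduct.π (fun _ : Fin H.index => W) (cosetEquiv H c1) := by
      conv_lhs => rw [← hA0 (Quotient.out ((cosetEquiv H).symm i))]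
      rw [Category.assoc, permMap_π, hc]
    have h2 : biproduct.ι (fun _ : Fin H.index => W) i ≫ B0
        = biproduct.ι (fun _ : Fin H.index => W) (cosetEquiv H c1) ≫ B0 := by
      conv_lhs => rw [← hB0 ((Quotient.out ((cosetEquiv H).symm i))⁻¹)]
      rw [← Category.assoc, ι_permMap, hc]
    calc A0 ≫
          (biproduct.π (fun _ : Fin H.index => W) i ≫ biproduct.ι (fun _ : Fin H.index => W) i) ≫
            B0
        = (A0 ≫ biproduct.π (fun _ : Fin H.index => W) i) ≫
            (biproduct.ι (fun _ : Fin H.index => W) i ≫ B0) := by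
          simp only [Category.assoc]
      _ = (A0 ≫ biproduct.π (fun _ : Fin H.index => W) (cosetEquiv H c1)) ≫
            (biproduct.ι (fun _ : Fin H.index => W) (cosetEquiv H c1) ≫ B0) := by
          rw [h1, h2]
      _ = A0 ≫
            (biproduct.π (fun _ : Fin H.index => W) (cosetEquiv H c1) ≫
              biproduct.ι (fun _ : Fin H.index => W) (cosetEquiv H c1)) ≫ B0 := by
          simp only [Category.assoc]
  rw [hone, Finset.sum_congr rfl fun i _ => hterm i, Finset.sum_const, Finset.card_univ,
    Fintype.card_fin, ← Nat.cast_smul_eq_nsmul k, hindex, zero_smul]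

end Main


theorem stmt_5_aux {k : Type*} [Field k] {A' : Type u} [Category.{v} A'] [Abelian A'] [Linear k A']
    (G : Type*) [Group G] [Finite G] (H : Subgroup G)
    (hindex : ((H.index : k) = 0))
    (invG : GRep A' G ⥤ A') (adjInvG : trivialRep A' G ⊣ invG)
    (coinvG : GRep A' G ⥤ A') (adjCoinvG : coinvG ⊣ trivialRep A' G)
    (ind : GRep A' ↥H ⥤ GRep A' G)
    (adj₁ : ind ⊣ resHom A' H.subtype) (adj₂ : resHom A' H.subtype ⊣ ind) :
    ∀ X : GRep A' ↥H,
      adjInvG.counit.app (ind.obj X) ≫ adjCoinvG.unit.app (ind.obj X) = 0 := by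
  intro X
  let T := trivialRep A' G
  let res := resHom A' H.subtype
  let MX := ind.obj X
  let a : T.obj (invG.obj MX) ⟶ MX := adjInvG.counit.app MX
  let b : MX ⟶ T.obj (coinvG.obj MX) := adjCoinvG.unit.app MX
  let V := invG.obj MX
  let W' := coinvG.obj MX
  let ahat : res.obj (T.obj V) ⟶ X := (adj₂.homEquiv (T.obj V) X).symm a
  have ha : a = adj₂.unit.app (T.obj V) ≫ ind.map ahat := by
    have h := (adj₂.homEquiv (T.obj V) X).apply_symm_apply a
    rw [Adjunction.homEquiv_unit] at h
    exact h.symm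
  let bhat : X ⟶ res.obj (T.obj W') := adj₁.homEquiv X (T.obj W') b
  have hb : b = ind.map bhat ≫ adj₁.counit.app (T.obj W') := by
    have h := (adj₁.homEquiv X (T.obj W')).symm_apply_apply b
    rw [Adjunction.homEquiv_counit] at h
    exact h.symm
  let c : V ⟶ W' := (ahat ≫ bhat).app (SingleObj.star ↥H)
  have hfull : ahat ≫ bhat = (resHom A' H.subtype).map (T.map c) := by
    ext x
    rfl
  show a ≫ b = 0
  rw [ha, hb]
  calc (adj₂.unit.app (T.obj V) ≫ ind.map ahat) ≫ (ind.map bhat ≫ adj₁.counit.app (T.obj W'))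
      = adj₂.unit.app (T.obj V) ≫ ind.map (ahat ≫ bhat) ≫ adj₁.counit.app (T.obj W') := by
        rw [ind.map_comp]
        simp only [Category.assoc]
    _ = adj₂.unit.app (T.obj V) ≫
          (resHom A' H.subtype ⋙ ind).map (T.map c) ≫ adj₁.counit.app (T.obj W') := by
        rw [hfull]
        rfl
    _ = (adj₂.unit.app (T.obj V) ≫ (resHom A' H.subtype ⋙ ind).map (T.map c)) ≫
          adj₁.counit.app (T.obj W') := by
        rw [Category.assoc]
    _ = ((𝟭 (GRep A' G)).map (T.map c) ≫ adj₂.unit.app (T.obj W')) ≫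
          adj₁.counit.app (T.obj W') := by
        rw [adj₂.unit.naturality]
    _ = T.map c ≫ adj₂.unit.app (T.obj W') ≫ adj₁.counit.app (T.obj W') := by
        simp only [Functor.id_map, Category.assoc]
    _ = T.map c ≫ 0 := by
        rw [triv_unit_counit_zero H hindex ind adj₁ adj₂ W']
    _ = 0 := comp_zero


/-- Let `A` be a `k`-linear abelian category, `G` a finite group and `H ≤ G`.
If the image of the index `|G : H|` in `k` is zero, then `Triv_G ∘ Ind_H^G = 0`:
for every `H`-object `X` in `A`, the composite of the canonical morphisms
`H^0(G, Ind_H^G X) → Ind_H^G X → H_0(G, Ind_H^G X)` (whose image defines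
`Triv_G(Ind_H^G X)`) is zero. -/
theorem stmt_5 {k : Type*} [Field k] {A : Type u} [Category.{v} A] [Abelian A] [Linear k A]
    (G : Type*) [Group G] [Finite G] (H : Subgroup G)
    (hindex : ((H.index : k) = 0))
    (invG : GRep A G ⥤ A) (adjInvG : trivialRep A G ⊣ invG)
    (coinvG : GRep A G ⥤ A) (adjCoinvG : coinvG ⊣ trivialRep A G)
    (ind : GRep A H ⥤ GRep A G)
    (adj₁ : ind ⊣ resHom A H.subtype) (adj₂ : resHom A H.subtype ⊣ ind) :
    ∀ X : GRep A H,
      adjInvG.counit.app (ind.obj X) ≫ adjCoinvG.unit.app (ind.obj X) = 0 := by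
  exact stmt_5_aux G H hindex invG adjInvG coinvG adjCoinvG ind adj₁ adj₂
end

section
/- (Categorical Green-type correspondence.) Let A be a k-linear abelian category with char(k) = p > 0, G a finite group, P a Sylow p-subgroup of G, and L = N_G(P) its normalizer. If H ≤ G contains L, then Triv_G ≅ Triv_H ∘ Res^G_H as functors Rep(G,A) → A. Moreover the canonical natural transformation H^0(G,−) ⇒ Triv_H is epic and Triv_H ⇒ H_0(G,−) is monic. -/
open CategoryTheory CategoryTheory.Limits

universe v u

namespace Green9

/-! ### Group-theoretic lemmas -/

lemma fixed_eq_one {p : ℕ} [Fact p.Prime] {G : Type*} [Group G] [Finite G]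
    (P : Sylow p G) (H : Subgroup G) (hLH : Subgroup.normalizer ((P : Subgroup G) : Set G) ≤ H)
    (c : G ⧸ H) (hc : ∀ x : G, x ∈ (P : Subgroup G) → x • c = c) :
    c = ((1 : G) : G ⧸ H) := by
  have hPH : (P : Subgroup G) ≤ H := le_trans Subgroup.le_normalizer hLH
  obtain ⟨g, rfl⟩ := QuotientGroup.mk_surjective c
  suffices hg : g ∈ H by
    rw [QuotientGroup.eq]; simpa using hg
  have hconj : ((g⁻¹ • P : Sylow p G) : Subgroup G) ≤ H := by
    rw [Sylow.coe_subgroup_smul, Subgroup.pointwise_smul_def]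
    rintro - ⟨x, hx, rfl⟩
    have hx2 := hc x hx
    rw [MulAction.Quotient.smul_mk, QuotientGroup.eq] at hx2
    have h3 : ((MulDistribMulAction.toMonoidEnd (MulAut G) G) (MulAut.conj g⁻¹)) x
        = g⁻¹ * x * g := by
      show g⁻¹ * x * g⁻¹⁻¹ = g⁻¹ * x * g
      rw [inv_inv]
    show g⁻¹ * x * g⁻¹⁻¹ ∈ H
    rw [inv_inv]
    have h4 : g⁻¹ * x * g = ((x • g)⁻¹ * g)⁻¹ := by
      rw [smul_eq_mul]; group
    rw [h4]
    exact H.inv_mem hx2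
  obtain ⟨u, hu⟩ := MulAction.exists_smul_eq (↥H) ((g⁻¹ • P).subtype hconj) (P.subtype hPH)
  rw [Sylow.smul_subtype] at hu
  have hcast : (u • (g⁻¹ • P) : Sylow p G) = ((↑u * g⁻¹ : G) • P) := by
    have : (u • (g⁻¹ • P) : Sylow p G) = ((u : G) • (g⁻¹ • P)) := rfl
    rw [this, ← mul_smul]
  have hPP : ((↑u * g⁻¹ : G) • P) = P := hcast.symm.trans (Sylow.subtype_injective hu)
  have hmem : (↑u * g⁻¹ : G) ∈ Subgroup.normalizer ((P : Subgroup G) : Set G) :=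
    Sylow.smul_eq_iff_mem_normalizer.mp hPP
  have h5 : (↑u * g⁻¹ : G) ∈ H := hLH hmem
  have h6 : (g⁻¹ : G) ∈ H := by
    have := H.mul_mem (H.inv_mem u.2) h5
    simpa [mul_assoc] using this
  simpa using H.inv_mem h6

lemma green_sum {k : Type*} [Field k] (p : ℕ) [Fact p.Prime] [CharP k p]
    {G : Type*} [Group G] [Finite G] (P : Sylow p G) (H : Subgroup G)
    (hLH : Subgroup.normalizer ((P : Subgroup G) : Set G) ≤ H)
    {M : Type*} [AddCommGroup M] [Module k M] [Fintype (G ⧸ H)]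
    (φ : G ⧸ H → M) (hφ : ∀ h : G, h ∈ H → ∀ c : G ⧸ H, φ (h • c) = φ c) :
    ∑ c : G ⧸ H, φ c = φ ((1 : G) : G ⧸ H) := by
  classical
  have hPH : (P : Subgroup G) ≤ H := le_trans Subgroup.le_normalizer hLH
  letI sd : Setoid (G ⧸ H) := MulAction.orbitRel ↥(P : Subgroup G) (G ⧸ H)
  have horb : ∀ a b : G ⧸ H, a ≈ b ↔ a ∈ MulAction.orbit ↥(P : Subgroup G) b := fun a b =>
    Iff.rfl
  rw [← Finset.sum_fiberwise Finset.univ (fun c => (⟦c⟧ : Quotient sd)) φ]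
  rw [Finset.sum_eq_single (⟦((1 : G) : G ⧸ H)⟧ : Quotient sd)]
  · have hfil : Finset.univ.filter (fun c => (⟦c⟧ : Quotient sd) = ⟦((1 : G) : G ⧸ H)⟧)
        = {((1 : G) : G ⧸ H)} := by
      apply Finset.ext; intro c
      simp only [Finset.mem_filter, Finset.mem_univ, true_and, Finset.mem_singleton]
      constructor
      · intro h
        obtain ⟨x, hx⟩ := (horb _ _).mp (Quotient.eq.mp h)
        have hone : x • (((1:G)) : G ⧸ H) = (((1:G)) : G ⧸ H) := by
          show ((x : G)) • (((1:G)) : G ⧸ H) = (((1:G)) : G ⧸ H)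
          rw [MulAction.Quotient.smul_mk, QuotientGroup.eq]
          simpa using H.inv_mem (hPH x.2)
        exact hx.symm.trans hone
      · rintro rfl; rfl
    rw [hfil, Finset.sum_singleton]
  · intro ω _ hω
    set c₀ := Quotient.out ω with hc₀
    have hmem : ∀ c ∈ Finset.univ.filter (fun c => (⟦c⟧ : Quotient sd) = ω), φ c = φ c₀ := by
      intro c hc
      rw [Finset.mem_filter] at hc
      have : c ≈ c₀ := by
        have := hc.2
        rw [← Quotient.out_eq ω] at this
        exact Quotient.eq.mp this
      obtain ⟨x, hx⟩ := (horb c c₀).mp this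
      rw [← hx]
      exact hφ (x : G) (hPH x.2) c₀
    rw [Finset.sum_congr rfl hmem, Finset.sum_const]
    have hfix : ¬ (∀ x : G, x ∈ (P : Subgroup G) → x • c₀ = c₀) := by
      intro hfix
      exact hω (by rw [← Quotient.out_eq ω, ← hc₀, fixed_eq_one P H hLH c₀ hfix])
    have hdvd : p ∣ (Finset.univ.filter (fun c => (⟦c⟧ : Quotient sd) = ω)).card := by
      have hset : Finset.univ.filter (fun c => (⟦c⟧ : Quotient sd) = ω)
          = (MulAction.orbit ↥(P : Subgroup G) c₀).toFinset := by
        apply Finset.ext; intro c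
        simp only [Finset.mem_filter, Finset.mem_univ, true_and, Set.mem_toFinset]
        rw [← Quotient.out_eq ω, ← hc₀, Quotient.eq]
        exact horb c c₀
      rw [hset, Set.toFinset_card]
      have hcard : Fintype.card (MulAction.orbit ↥(P : Subgroup G) c₀)
          = (MulAction.stabilizer ↥(P : Subgroup G) c₀).index := by
        rw [← Nat.card_eq_fintype_card, Nat.card_congr
          (MulAction.orbitEquivQuotientStabilizer ↥(P : Subgroup G) c₀), Subgroup.index]
      rw [hcard]
      obtain ⟨n, hn⟩ := IsPGroup.iff_card.mp P.2
      have hd : (MulAction.stabilizer ↥(P : Subgroup G) c₀).index ∣ p ^ n := by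
        rw [← hn]; exact Subgroup.index_dvd_card _
      obtain ⟨m, hm, hidx⟩ := (Nat.dvd_prime_pow Fact.out).mp hd
      have hm1 : m ≠ 0 := by
        intro h0
        rw [h0, pow_zero] at hidx
        have := Subgroup.index_eq_one.mp hidx
        apply hfix
        intro x hx
        have hxt : (⟨x, hx⟩ : ↥(P : Subgroup G)) ∈ (⊤ : Subgroup ↥(P : Subgroup G)) :=
          Subgroup.mem_top _
        rw [← this, MulAction.mem_stabilizer_iff] at hxt
        exact hxt
      rw [hidx]
      exact dvd_pow_self p hm1
    have : ((Finset.univ.filter (fun c => (⟦c⟧ : Quotient sd) = ω)).card : k) = 0 :=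
      (CharP.cast_eq_zero_iff k p _).mpr hdvd
    rw [← Nat.cast_smul_eq_nsmul k, this, zero_smul]
  · intro h; exact absurd (Finset.mem_univ _) h

/-! ### Category-theoretic helpers for `GRep` -/

variable {A : Type u} [Category.{v} A] {M : Type*} [Monoid M]

lemma hom_ext {X Y : GRep A M} {f g : X ⟶ Y}
    (h : f.app (SingleObj.star M) = g.app (SingleObj.star M)) : f = g := by
  apply NatTrans.ext; funext x; exact h

def act (X : GRep A M) (m : M) : X.obj (SingleObj.star M) ⟶ X.obj (SingleObj.star M) :=
  X.map (show SingleObj.star M ⟶ SingleObj.star M from m)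

lemma act_mul (X : GRep A M) (a b : M) : act X (a * b) = act X b ≫ act X a :=
  X.map_comp _ _

lemma act_one (X : GRep A M) : act X (1 : M) = 𝟙 _ := X.map_id _

section Inv
variable {R : GRep A M ⥤ A} (adj : trivialRep A M ⊣ R) (X : GRep A M)

def iota : R.obj X ⟶ X.obj (SingleObj.star M) := (adj.counit.app X).app (SingleObj.star M)

lemma iota_act (m : M) : iota adj X ≫ act X m = iota adj X := by
  have := (adj.counit.app X).naturality (show SingleObj.star M ⟶ SingleObj.star M from m)
  simpa [act, iota] using this.symm

lemma homEquiv_comp_iota {W : A} (φ : (trivialRep A M).obj W ⟶ X) :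
    (adj.homEquiv W X) φ ≫ iota adj X = φ.app (SingleObj.star M) := by
  have h := adj.homEquiv_counit (X := W) (Y := X) (g := (adj.homEquiv W X) φ)
  rw [Equiv.symm_apply_apply] at h
  have := congrArg (fun t => t.app (SingleObj.star M)) h.symm
  simpa [iota] using this

lemma iota_cancel {W : A} {a b : W ⟶ R.obj X}
    (h : a ≫ iota adj X = b ≫ iota adj X) : a = b := by
  apply (adj.homEquiv W X).symm.injective
  apply hom_ext
  simpa [Adjunction.homEquiv_counit, iota] using h

def constHom {W : A} (f : W ⟶ X.obj (SingleObj.star M))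
    (hf : ∀ m : M, f ≫ act X m = f) : (trivialRep A M).obj W ⟶ X where
  app _ := f
  naturality a b m := by
    have : X.map m = act X m := rfl
    simp [this, hf m]

def factor {W : A} (f : W ⟶ X.obj (SingleObj.star M))
    (hf : ∀ m : M, f ≫ act X m = f) : W ⟶ R.obj X :=
  adj.homEquiv W X (constHom X f hf)

lemma factor_iota {W : A} (f : W ⟶ X.obj (SingleObj.star M))
    (hf : ∀ m : M, f ≫ act X m = f) : factor adj X f hf ≫ iota adj X = f :=
  homEquiv_comp_iota adj X _

lemma iota_natural {X Y : GRep A M} (f : X ⟶ Y) :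
    R.map f ≫ iota adj Y = iota adj X ≫ f.app (SingleObj.star M) := by
  have := congrArg (fun t => t.app (SingleObj.star M)) (adj.counit.naturality f)
  simp only [NatTrans.comp_app, Functor.comp_map, Functor.const_map_app, Functor.id_map] at this
  exact this

end Inv

section Coinv
variable {L : GRep A M ⥤ A} (adj : L ⊣ trivialRep A M) (X : GRep A M)

def piM : X.obj (SingleObj.star M) ⟶ L.obj X := (adj.unit.app X).app (SingleObj.star M)

lemma act_piM (m : M) : act X m ≫ piM adj X = piM adj X := by
  have := (adj.unit.app X).naturality (show SingleObj.star M ⟶ SingleObj.star M from m)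
  simpa [act, piM] using this.symm

lemma piM_comp_homEquiv_symm {Z : A} (φ : X ⟶ (trivialRep A M).obj Z) :
    piM adj X ≫ (adj.homEquiv X Z).symm φ = φ.app (SingleObj.star M) := by
  have h := adj.homEquiv_unit (X := X) (Y := Z) (f := (adj.homEquiv X Z).symm φ)
  rw [Equiv.apply_symm_apply] at h
  have := congrArg (fun t => t.app (SingleObj.star M)) h.symm
  simpa [piM] using this

lemma piM_cancel {Z : A} {a b : L.obj X ⟶ Z}
    (h : piM adj X ≫ a = piM adj X ≫ b) : a = b := by
  apply (adj.homEquiv X Z).injective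
  apply hom_ext
  simpa [Adjunction.homEquiv_unit, piM] using h

def constHom' {Z : A} (f : X.obj (SingleObj.star M) ⟶ Z)
    (hf : ∀ m : M, act X m ≫ f = f) : X ⟶ (trivialRep A M).obj Z where
  app _ := f
  naturality a b m := by
    have : X.map m = act X m := rfl
    simp [this, hf m]

def cofactor {Z : A} (f : X.obj (SingleObj.star M) ⟶ Z)
    (hf : ∀ m : M, act X m ≫ f = f) : L.obj X ⟶ Z :=
  (adj.homEquiv X Z).symm (constHom' X f hf)

lemma piM_cofactor {Z : A} (f : X.obj (SingleObj.star M) ⟶ Z)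
    (hf : ∀ m : M, act X m ≫ f = f) : piM adj X ≫ cofactor adj X f hf = f :=
  piM_comp_homEquiv_symm adj X _

lemma piM_natural {X Y : GRep A M} (f : X ⟶ Y) :
    piM adj X ≫ L.map f = f.app (SingleObj.star M) ≫ piM adj Y := by
  have := congrArg (fun t => t.app (SingleObj.star M)) (adj.unit.naturality f)
  simp only [NatTrans.comp_app, Functor.comp_map, Functor.const_map_app, Functor.id_map] at this
  exact this.symm

end Coinv

/-! ### Transfers -/

section GroupPart
variable {G : Type*} [Group G] (H : Subgroup G)

def cosetHom {W Z : A} (f : G → (W ⟶ Z))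
    (hf : ∀ (g h : G), h ∈ H → f (g * h) = f g) : G ⧸ H → (W ⟶ Z) :=
  fun c => Quotient.liftOn' c f (by
    intro a b hab
    rw [QuotientGroup.leftRel_apply] at hab
    have hb : b = a * (a⁻¹ * b) := by group
    rw [hb]
    exact (hf a _ hab).symm)

lemma cosetHom_mk {W Z : A} (f : G → (W ⟶ Z)) (hf) (g : G) :
    cosetHom H f hf ((g : G) : G ⧸ H) = f g := rfl

lemma cosetHom_smul_mk {W Z : A} (f : G → (W ⟶ Z)) (hf) (g₀ g : G) :
    cosetHom H f hf ((g₀ : G) • ((g : G) : G ⧸ H)) = f (g₀ * g) := by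
  rw [MulAction.Quotient.smul_mk]; rfl

variable [Preadditive A] [Fintype (G ⧸ H)]

lemma sum_reindex {W Z : A} (ψ : G ⧸ H → (W ⟶ Z)) (g₀ : G) :
    ∑ c : G ⧸ H, ψ (g₀ • c) = ∑ c : G ⧸ H, ψ c :=
  Equiv.sum_comp (MulAction.toPerm g₀) ψ

variable {invH : GRep A ↥H ⥤ A} (adjInvH : trivialRep A ↥H ⊣ invH)
variable {invG : GRep A G ⥤ A} (adjInvG : trivialRep A G ⊣ invG)
variable {coinvH : GRep A ↥H ⥤ A} (adjCoinvH : coinvH ⊣ trivialRep A ↥H)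
variable {coinvG : GRep A G ⥤ A} (adjCoinvG : coinvG ⊣ trivialRep A G)
variable (X : GRep A G)

lemma iotaH_act (h : G) (hh : h ∈ H) :
    iota adjInvH ((resHom A H.subtype).obj X) ≫ act X h
      = iota adjInvH ((resHom A H.subtype).obj X) :=
  iota_act adjInvH ((resHom A H.subtype).obj X) (⟨h, hh⟩ : ↥H)

lemma act_piH (h : G) (hh : h ∈ H) :
    act X h ≫ piM adjCoinvH ((resHom A H.subtype).obj X)
      = piM adjCoinvH ((resHom A H.subtype).obj X) :=
  act_piM adjCoinvH ((resHom A H.subtype).obj X) (⟨h, hh⟩ : ↥H)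

lemma kapf_hf : ∀ (g h : G), h ∈ H →
    (fun g => iota adjInvH ((resHom A H.subtype).obj X) ≫ act X g) (g * h)
      = (fun g => iota adjInvH ((resHom A H.subtype).obj X) ≫ act X g) g := fun g h hh => by
  show iota adjInvH ((resHom A H.subtype).obj X) ≫ act X (g * h)
    = iota adjInvH ((resHom A H.subtype).obj X) ≫ act X g
  erw [act_mul, ← Category.assoc, iotaH_act H adjInvH X h hh]
  rfl

def kappa : invH.obj ((resHom A H.subtype).obj X) ⟶ X.obj (SingleObj.star G) :=
  ∑ c : G ⧸ H, cosetHom H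
    (fun g => iota adjInvH ((resHom A H.subtype).obj X) ≫ act X g)
    (kapf_hf H adjInvH X) c

lemma kappa_inv (g₀ : G) : kappa H adjInvH X ≫ act X g₀ = kappa H adjInvH X := by
  unfold kappa
  rw [Preadditive.sum_comp]
  have hc : ∀ c : G ⧸ H, (cosetHom H (fun g => iota adjInvH ((resHom A H.subtype).obj X) ≫ act X g) (kapf_hf H adjInvH X) c) ≫ act X g₀
      = cosetHom H (fun g => iota adjInvH ((resHom A H.subtype).obj X) ≫ act X g)
        (kapf_hf H adjInvH X) (g₀ • c) := by
    intro c
    refine Quotient.inductionOn' c (fun g => ?_)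
    erw [show (Quotient.mk'' g : G ⧸ H) = ((g : G) : G ⧸ H) from rfl, cosetHom_smul_mk,
      cosetHom_mk, act_mul, Category.assoc]
    rfl
  rw [Finset.sum_congr rfl (fun c _ => hc c), sum_reindex]

def tmap : invH.obj ((resHom A H.subtype).obj X) ⟶ invG.obj X :=
  factor adjInvG X (kappa H adjInvH X) (kappa_inv H adjInvH X)

lemma tmap_iota :
    tmap H adjInvH adjInvG X ≫ iota adjInvG X = kappa H adjInvH X :=
  factor_iota adjInvG X _ _

lemma kapf'_hf : ∀ (g h : G), h ∈ H →
    (fun g => act X g⁻¹ ≫ piM adjCoinvH ((resHom A H.subtype).obj X)) (g * h)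
      = (fun g => act X g⁻¹ ≫ piM adjCoinvH ((resHom A H.subtype).obj X)) g := fun g h hh => by
  show act X (g * h)⁻¹ ≫ piM adjCoinvH ((resHom A H.subtype).obj X)
    = act X g⁻¹ ≫ piM adjCoinvH ((resHom A H.subtype).obj X)
  erw [mul_inv_rev, act_mul, Category.assoc, act_piH H adjCoinvH X h⁻¹ (H.inv_mem hh)]

def kappa' : X.obj (SingleObj.star G) ⟶ coinvH.obj ((resHom A H.subtype).obj X) :=
  ∑ c : G ⧸ H, cosetHom H
    (fun g => act X g⁻¹ ≫ piM adjCoinvH ((resHom A H.subtype).obj X))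
    (kapf'_hf H adjCoinvH X) c

lemma kappa'_inv (g₀ : G) : act X g₀ ≫ kappa' H adjCoinvH X = kappa' H adjCoinvH X := by
  unfold kappa'
  rw [Preadditive.comp_sum]
  have hc : ∀ c : G ⧸ H, act X g₀ ≫ (cosetHom H (fun g => act X g⁻¹ ≫ piM adjCoinvH ((resHom A H.subtype).obj X)) (kapf'_hf H adjCoinvH X) c)
      = cosetHom H (fun g => act X g⁻¹ ≫ piM adjCoinvH ((resHom A H.subtype).obj X))
          (kapf'_hf H adjCoinvH X) (g₀⁻¹ • c) := by
    intro c
    refine Quotient.inductionOn' c (fun g => ?_)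
    erw [show (Quotient.mk'' g : G ⧸ H) = ((g : G) : G ⧸ H) from rfl, cosetHom_smul_mk,
      cosetHom_mk, ← Category.assoc]
    have : act X g₀ ≫ act X g⁻¹ = act X (g₀⁻¹ * g)⁻¹ := by
      rw [mul_inv_rev, inv_inv, act_mul]
    rw [this]
  rw [Finset.sum_congr rfl (fun c _ => hc c), sum_reindex]

def smap : coinvG.obj X ⟶ coinvH.obj ((resHom A H.subtype).obj X) :=
  cofactor adjCoinvG X (kappa' H adjCoinvH X) (kappa'_inv H adjCoinvH X)

lemma piM_smap :
    piM adjCoinvG X ≫ smap H adjCoinvH adjCoinvG X = kappa' H adjCoinvH X :=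
  piM_cofactor adjCoinvG X _ _

end GroupPart
end Green9

namespace Green9.Main
open Green9
/-! ### The main identities -/

variable {k : Type*} [Field k] (p : ℕ) [Fact p.Prime] [CharP k p]
variable {A : Type u} [Category.{v} A] [Preadditive A] [Linear k A]
variable {G : Type*} [Group G] [Finite G] (P : Sylow p G) {H : Subgroup G}
variable (hLH : Subgroup.normalizer ((P : Subgroup G) : Set G) ≤ H) [Fintype (G ⧸ H)]
variable {invH : GRep A ↥H ⥤ A} (adjInvH : trivialRep A ↥H ⊣ invH)
variable {invG : GRep A G ⥤ A} (adjInvG : trivialRep A G ⊣ invG)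
variable {coinvH : GRep A ↥H ⥤ A} (adjCoinvH : coinvH ⊣ trivialRep A ↥H)
variable {coinvG : GRep A G ⥤ A} (adjCoinvG : coinvG ⊣ trivialRep A G)
variable (X : GRep A G)

def jmap : invG.obj X ⟶ invH.obj ((resHom A H.subtype).obj X) :=
  (adjInvH.homEquiv (invG.obj X) ((resHom A H.subtype).obj X))
    ((resHom A H.subtype).map (adjInvG.counit.app X))

def rmap : coinvH.obj ((resHom A H.subtype).obj X) ⟶ coinvG.obj X :=
  (adjCoinvH.homEquiv ((resHom A H.subtype).obj X) (coinvG.obj X)).symm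
    ((resHom A H.subtype).map (adjCoinvG.unit.app X))

lemma jmap_iota :
    jmap adjInvH adjInvG X ≫ iota adjInvH ((resHom A H.subtype).obj X) = iota adjInvG X :=
  homEquiv_comp_iota adjInvH ((resHom A H.subtype).obj X)
    ((resHom A H.subtype).map (adjInvG.counit.app X))

lemma piH_rmap :
    piM adjCoinvH ((resHom A H.subtype).obj X) ≫ rmap adjCoinvH adjCoinvG X
      = piM adjCoinvG X :=
  piM_comp_homEquiv_symm adjCoinvH ((resHom A H.subtype).obj X)
    ((resHom A H.subtype).map (adjCoinvG.unit.app X))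

lemma jmap_natural {X Y : GRep A G} (f : X ⟶ Y) :
    jmap adjInvH adjInvG X ≫ invH.map ((resHom A H.subtype).map f)
      = invG.map f ≫ jmap adjInvH adjInvG Y := by
  apply iota_cancel adjInvH ((resHom A H.subtype).obj Y)
  rw [Category.assoc, Category.assoc, jmap_iota,
    iota_natural adjInvH ((resHom A H.subtype).map f), ← Category.assoc, jmap_iota]
  exact (iota_natural adjInvG f).symm

include P hLH in
lemma card_one : ((Fintype.card (G ⧸ H)) : k) = 1 := by
  have := green_sum (k := k) p P H hLH (M := k) (fun _ => (1 : k)) (fun h hh c => rfl)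
  simpa [Finset.sum_const, nsmul_eq_mul] using this

include k p P hLH in
lemma scard {W Z : A} (f : W ⟶ Z) : (∑ _c : G ⧸ H, f) = f := by
  rw [Finset.sum_const, Finset.card_univ, ← Nat.cast_smul_eq_nsmul k,
    card_one p P hLH, one_smul]

include k p P hLH in
lemma I1 : jmap adjInvH adjInvG X ≫ tmap H adjInvH adjInvG X = 𝟙 (invG.obj X) := by
  apply iota_cancel adjInvG X
  rw [Category.assoc, tmap_iota, Category.id_comp]
  unfold kappa
  rw [Preadditive.comp_sum]
  have hc : ∀ c : G ⧸ H, jmap adjInvH adjInvG X ≫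
      cosetHom H (fun g => iota adjInvH ((resHom A H.subtype).obj X) ≫ act X g)
        (kapf_hf H adjInvH X) c = iota adjInvG X := by
    intro c
    refine Quotient.inductionOn' c (fun g => ?_)
    erw [show (Quotient.mk'' g : G ⧸ H) = ((g : G) : G ⧸ H) from rfl, cosetHom_mk,
      ← Category.assoc, jmap_iota, iota_act]
  rw [Finset.sum_congr rfl (fun c _ => hc c)]
  exact scard (k := k) p P hLH _

include k p P hLH in
lemma I2 : (tmap H adjInvH adjInvG X ≫ jmap adjInvH adjInvG X) ≫
      (iota adjInvH ((resHom A H.subtype).obj X) ≫ piM adjCoinvH ((resHom A H.subtype).obj X))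
    = iota adjInvH ((resHom A H.subtype).obj X) ≫ piM adjCoinvH ((resHom A H.subtype).obj X)
    := by
  erw [Category.assoc, ← Category.assoc (jmap adjInvH adjInvG X), jmap_iota, ← Category.assoc,
    tmap_iota]
  unfold kappa
  erw [Preadditive.sum_comp]
  have hphi : ∀ h : G, h ∈ H → ∀ c : G ⧸ H,
      (fun c => cosetHom H
        (fun g => iota adjInvH ((resHom A H.subtype).obj X) ≫ act X g)
        (kapf_hf H adjInvH X) c ≫ piM adjCoinvH ((resHom A H.subtype).obj X)) (h • c)
      = (fun c => cosetHom H
        (fun g => iota adjInvH ((resHom A H.subtype).obj X) ≫ act X g)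
        (kapf_hf H adjInvH X) c ≫ piM adjCoinvH ((resHom A H.subtype).obj X)) c := by
    intro h hh c
    refine Quotient.inductionOn' c (fun g => ?_)
    show cosetHom H _ (kapf_hf H adjInvH X) (h • ((g : G) : G ⧸ H)) ≫ _
      = cosetHom H _ (kapf_hf H adjInvH X) ((g : G) : G ⧸ H) ≫ _
    erw [cosetHom_smul_mk, cosetHom_mk, act_mul, Category.assoc, Category.assoc,
      act_piH H adjCoinvH X h hh, Category.assoc]
  have hgs := green_sum (k := k) p P H hLH
    (fun c => cosetHom H
        (fun g => iota adjInvH ((resHom A H.subtype).obj X) ≫ act X g)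
        (kapf_hf H adjInvH X) c ≫ piM adjCoinvH ((resHom A H.subtype).obj X)) hphi
  erw [hgs]
  show cosetHom H _ (kapf_hf H adjInvH X) (((1:G) : G) : G ⧸ H) ≫ _ = _
  rw [cosetHom_mk, iotaH_act H adjInvH X 1 (one_mem H)]
  rfl

include k p P hLH in
lemma I3 : tmap H adjInvH adjInvG X ≫ (iota adjInvG X ≫ piM adjCoinvG X)
    = (iota adjInvH ((resHom A H.subtype).obj X) ≫ piM adjCoinvH ((resHom A H.subtype).obj X))
        ≫ rmap adjCoinvH adjCoinvG X := by
  rw [← Category.assoc, tmap_iota, Category.assoc, piH_rmap]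
  unfold kappa
  rw [Preadditive.sum_comp]
  have hc : ∀ c : G ⧸ H,
      cosetHom H (fun g => iota adjInvH ((resHom A H.subtype).obj X) ≫ act X g)
        (kapf_hf H adjInvH X) c ≫ piM adjCoinvG X
      = iota adjInvH ((resHom A H.subtype).obj X) ≫ piM adjCoinvG X := by
    intro c
    refine Quotient.inductionOn' c (fun g => ?_)
    erw [show (Quotient.mk'' g : G ⧸ H) = ((g : G) : G ⧸ H) from rfl, cosetHom_mk,
      Category.assoc, act_piM adjCoinvG X g]
  rw [Finset.sum_congr rfl (fun c _ => hc c)]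
  exact scard (k := k) p P hLH _

include k p P hLH in
lemma I4 : jmap adjInvH adjInvG X ≫
      (iota adjInvH ((resHom A H.subtype).obj X) ≫ piM adjCoinvH ((resHom A H.subtype).obj X))
    = (iota adjInvG X ≫ piM adjCoinvG X) ≫ smap H adjCoinvH adjCoinvG X := by
  rw [← Category.assoc, jmap_iota, Category.assoc, piM_smap]
  unfold kappa'
  rw [Preadditive.comp_sum]
  have hc : ∀ c : G ⧸ H, iota adjInvG X ≫
      cosetHom H (fun g => act X g⁻¹ ≫ piM adjCoinvH ((resHom A H.subtype).obj X))
        (kapf'_hf H adjCoinvH X) c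
      = iota adjInvG X ≫ piM adjCoinvH ((resHom A H.subtype).obj X) := by
    intro c
    refine Quotient.inductionOn' c (fun g => ?_)
    erw [show (Quotient.mk'' g : G ⧸ H) = ((g : G) : G ⧸ H) from rfl, cosetHom_mk,
      ← Category.assoc, iota_act]
  rw [Finset.sum_congr rfl (fun c _ => hc c)]
  exact (scard (k := k) p P hLH
    (iota adjInvG X ≫ piM adjCoinvH ((resHom A H.subtype).obj X))).symm

end Green9.Main

open Green9 Green9.Main

/-- Categorical Green-type correspondence.  Let `A` be a `k`-linear abelian category with
`char k = p > 0`, `G` a finite group, `P` a Sylow `p`-subgroup and `L = N_G(P)` its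
normalizer.  Suppose `H ≤ G` contains `L`.  Given the invariants/coinvariants functors
for `G` and `H` and the functors `Triv_G`, `Triv_H` (images of the canonical
transformations from invariants to coinvariants), one has `Triv_G ≅ Triv_H ∘ Res^G_H`;
moreover the canonical transformation `H^0(G,−) ⇒ Triv_H(Res^G_H −)` is epic and
`Triv_H(Res^G_H −) ⇒ H_0(G,−)` is monic. -/
theorem stmt_9 {k : Type*} [Field k] (p : ℕ) [Fact p.Prime] [CharP k p]
    {A : Type u} [Category.{v} A] [Abelian A] [Linear k A]
    (G : Type*) [Group G] [Finite G]
    (P : Sylow p G) (H : Subgroup G)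
    (hLH : Subgroup.normalizer ((P : Subgroup G) : Set G) ≤ H)
    (invG : GRep A G ⥤ A) (adjInvG : trivialRep A G ⊣ invG)
    (coinvG : GRep A G ⥤ A) (adjCoinvG : coinvG ⊣ trivialRep A G)
    (invH : GRep A H ⥤ A) (adjInvH : trivialRep A H ⊣ invH)
    (coinvH : GRep A H ⥤ A) (adjCoinvH : coinvH ⊣ trivialRep A H)
    (TrivG : GRep A G ⥤ A) (pG : invG ⟶ TrivG) (iG : TrivG ⟶ coinvG)
    (hpG : ∀ X, Epi (pG.app X)) (hiG : ∀ X, Mono (iG.app X))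
    (hfacG : ∀ X, pG.app X ≫ iG.app X =
      (adjInvG.counit.app X ≫ adjCoinvG.unit.app X).app (SingleObj.star G))
    (TrivH : GRep A H ⥤ A) (pH : invH ⟶ TrivH) (iH : TrivH ⟶ coinvH)
    (hpH : ∀ X, Epi (pH.app X)) (hiH : ∀ X, Mono (iH.app X))
    (hfacH : ∀ X, pH.app X ≫ iH.app X =
      (adjInvH.counit.app X ≫ adjCoinvH.unit.app X).app (SingleObj.star H)) :
    Nonempty (TrivG ≅ resHom A H.subtype ⋙ TrivH) ∧
    (∀ X : GRep A G,
      Epi ((adjInvH.homEquiv (invG.obj X) ((resHom A H.subtype).obj X))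
            ((resHom A H.subtype).map (adjInvG.counit.app X)) ≫
          pH.app ((resHom A H.subtype).obj X))) ∧
    (∀ X : GRep A G,
      Mono (iH.app ((resHom A H.subtype).obj X) ≫
          (adjCoinvH.homEquiv ((resHom A H.subtype).obj X) (coinvG.obj X)).symm
            ((resHom A H.subtype).map (adjCoinvG.unit.app X)))) := by
  classical
  haveI : Fintype (G ⧸ H) := Fintype.ofFinite _
  -- factorization through iota/pi
  have hfG : ∀ X : GRep A G, pG.app X ≫ iG.app X = iota adjInvG X ≫ piM adjCoinvG X :=
    fun X => by rw [hfacG X]; rfl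
  have hfH : ∀ X' : GRep A ↥H, pH.app X' ≫ iH.app X' = iota adjInvH X' ≫ piM adjCoinvH X' :=
    fun X' => by rw [hfacH X']; rfl
  -- construct α
  have hex : ∀ X : GRep A G, ∃ a : TrivG.obj X ⟶ TrivH.obj ((resHom A H.subtype).obj X),
      pG.app X ≫ a = jmap adjInvH adjInvG X ≫ pH.app ((resHom A H.subtype).obj X) := by
    intro X
    haveI := hpG X
    refine ⟨Abelian.epiDesc (pG.app X) _ ?_, Abelian.comp_epiDesc _ _ _⟩
    haveI := hiH ((resHom A H.subtype).obj X)
    rw [← cancel_mono (iH.app ((resHom A H.subtype).obj X))]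
    rw [Category.assoc, Category.assoc, hfH, I4 (k := k) p P hLH adjInvH adjInvG adjCoinvH
      adjCoinvG X, ← hfG]
    simp only [← Category.assoc]
    rw [kernel.condition]
    simp
  have hex' : ∀ X : GRep A G, ∃ b : TrivH.obj ((resHom A H.subtype).obj X) ⟶ TrivG.obj X,
      pH.app ((resHom A H.subtype).obj X) ≫ b = tmap H adjInvH adjInvG X ≫ pG.app X := by
    intro X
    haveI := hpH ((resHom A H.subtype).obj X)
    refine ⟨Abelian.epiDesc (pH.app ((resHom A H.subtype).obj X)) _ ?_,
      Abelian.comp_epiDesc _ _ _⟩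
    haveI := hiG X
    rw [← cancel_mono (iG.app X)]
    rw [Category.assoc, Category.assoc, hfG,
      I3 (k := k) p P hLH adjInvH adjInvG adjCoinvH adjCoinvG X, ← hfH]
    simp only [← Category.assoc]
    rw [kernel.condition]
    simp
  choose α hα using hex
  choose β hβ using hex'
  -- α and β are mutually inverse
  have hαβ : ∀ X : GRep A G, α X ≫ β X = 𝟙 (TrivG.obj X) := by
    intro X
    haveI := hpG X
    rw [← cancel_epi (pG.app X), ← Category.assoc, hα, Category.assoc, hβ, ← Category.assoc,
      I1 (k := k) p P hLH adjInvH adjInvG X, Category.id_comp, Category.comp_id]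
  have hβα : ∀ X : GRep A G,
      β X ≫ α X = 𝟙 (TrivH.obj ((resHom A H.subtype).obj X)) := by
    intro X
    haveI := hpH ((resHom A H.subtype).obj X)
    haveI := hiH ((resHom A H.subtype).obj X)
    have key : pH.app ((resHom A H.subtype).obj X) ≫ β X ≫ α X ≫
          iH.app ((resHom A H.subtype).obj X)
        = pH.app ((resHom A H.subtype).obj X) ≫ iH.app ((resHom A H.subtype).obj X) := by
      calc pH.app ((resHom A H.subtype).obj X) ≫ β X ≫ α X ≫
            iH.app ((resHom A H.subtype).obj X)
          = (pH.app ((resHom A H.subtype).obj X) ≫ β X) ≫ (α X ≫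
            iH.app ((resHom A H.subtype).obj X)) := by simp only [Category.assoc]
        _ = (tmap H adjInvH adjInvG X ≫ pG.app X) ≫ (α X ≫
            iH.app ((resHom A H.subtype).obj X)) := by rw [hβ]
        _ = tmap H adjInvH adjInvG X ≫ (pG.app X ≫ α X) ≫
            iH.app ((resHom A H.subtype).obj X) := by simp only [Category.assoc]
        _ = tmap H adjInvH adjInvG X ≫ (jmap adjInvH adjInvG X ≫
            pH.app ((resHom A H.subtype).obj X)) ≫
            iH.app ((resHom A H.subtype).obj X) := by rw [hα]
        _ = (tmap H adjInvH adjInvG X ≫ jmap adjInvH adjInvG X) ≫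
            (pH.app ((resHom A H.subtype).obj X) ≫
              iH.app ((resHom A H.subtype).obj X)) := by simp only [Category.assoc]
        _ = (tmap H adjInvH adjInvG X ≫ jmap adjInvH adjInvG X) ≫
            (iota adjInvH ((resHom A H.subtype).obj X) ≫
              piM adjCoinvH ((resHom A H.subtype).obj X)) := by rw [hfH]
        _ = iota adjInvH ((resHom A H.subtype).obj X) ≫
              piM adjCoinvH ((resHom A H.subtype).obj X) :=
            I2 (k := k) p P hLH adjInvH adjInvG adjCoinvH X
        _ = pH.app ((resHom A H.subtype).obj X) ≫ iH.app ((resHom A H.subtype).obj X) :=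
            (hfH _).symm
    rw [← cancel_epi (pH.app ((resHom A H.subtype).obj X)),
      ← cancel_mono (iH.app ((resHom A H.subtype).obj X))]
    simpa only [Category.assoc, Category.id_comp, Category.comp_id] using key
  have hβi : ∀ X : GRep A G,
      iH.app ((resHom A H.subtype).obj X) ≫ rmap adjCoinvH adjCoinvG X
        = β X ≫ iG.app X := by
    intro X
    haveI := hpH ((resHom A H.subtype).obj X)
    rw [← cancel_epi (pH.app ((resHom A H.subtype).obj X))]
    calc pH.app ((resHom A H.subtype).obj X) ≫ iH.app ((resHom A H.subtype).obj X) ≫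
          rmap adjCoinvH adjCoinvG X
        = (pH.app ((resHom A H.subtype).obj X) ≫ iH.app ((resHom A H.subtype).obj X)) ≫
          rmap adjCoinvH adjCoinvG X := by simp only [Category.assoc]
      _ = (iota adjInvH ((resHom A H.subtype).obj X) ≫
            piM adjCoinvH ((resHom A H.subtype).obj X)) ≫
          rmap adjCoinvH adjCoinvG X := by rw [hfH]
      _ = tmap H adjInvH adjInvG X ≫ (iota adjInvG X ≫ piM adjCoinvG X) :=
          (I3 (k := k) p P hLH adjInvH adjInvG adjCoinvH adjCoinvG X).symm
      _ = tmap H adjInvH adjInvG X ≫ (pG.app X ≫ iG.app X) := by rw [hfG]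
      _ = (tmap H adjInvH adjInvG X ≫ pG.app X) ≫ iG.app X := by simp only [Category.assoc]
      _ = (pH.app ((resHom A H.subtype).obj X) ≫ β X) ≫ iG.app X := by rw [hβ]
      _ = pH.app ((resHom A H.subtype).obj X) ≫ β X ≫ iG.app X := by
          simp only [Category.assoc]
  have hnat : ∀ {X Y : GRep A G} (f : X ⟶ Y),
      TrivG.map f ≫ α Y = α X ≫ (resHom A H.subtype ⋙ TrivH).map f := by
    intro X Y f
    haveI := hpG X
    rw [← cancel_epi (pG.app X)]
    calc pG.app X ≫ TrivG.map f ≫ α Y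
        = (pG.app X ≫ TrivG.map f) ≫ α Y := by simp only [Category.assoc]
      _ = (invG.map f ≫ pG.app Y) ≫ α Y := by rw [pG.naturality f]
      _ = invG.map f ≫ (pG.app Y ≫ α Y) := by simp only [Category.assoc]
      _ = invG.map f ≫ (jmap adjInvH adjInvG Y ≫ pH.app ((resHom A H.subtype).obj Y)) := by
          rw [hα Y]
      _ = (invG.map f ≫ jmap adjInvH adjInvG Y) ≫ pH.app ((resHom A H.subtype).obj Y) := by
          simp only [Category.assoc]
      _ = (jmap adjInvH adjInvG X ≫ invH.map ((resHom A H.subtype).map f)) ≫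
            pH.app ((resHom A H.subtype).obj Y) := by
          rw [← jmap_natural adjInvH adjInvG f]
      _ = jmap adjInvH adjInvG X ≫ (invH.map ((resHom A H.subtype).map f) ≫
            pH.app ((resHom A H.subtype).obj Y)) := by simp only [Category.assoc]
      _ = jmap adjInvH adjInvG X ≫ (pH.app ((resHom A H.subtype).obj X) ≫
            TrivH.map ((resHom A H.subtype).map f)) := by
          rw [pH.naturality ((resHom A H.subtype).map f)]
      _ = (jmap adjInvH adjInvG X ≫ pH.app ((resHom A H.subtype).obj X)) ≫
            TrivH.map ((resHom A H.subtype).map f) := by simp only [Category.assoc]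
      _ = (pG.app X ≫ α X) ≫ TrivH.map ((resHom A H.subtype).map f) := by rw [hα X]
      _ = pG.app X ≫ α X ≫ (resHom A H.subtype ⋙ TrivH).map f := by
          simp only [Category.assoc, Functor.comp_map]
  refine ⟨⟨NatIso.ofComponents (fun X => ⟨α X, β X, hαβ X, hβα X⟩)
    (fun f => hnat f)⟩, ?_, ?_⟩
  · intro X
    haveI := hpG X
    haveI : IsIso (α X) := ⟨β X, hαβ X, hβα X⟩
    show Epi (jmap adjInvH adjInvG X ≫ pH.app ((resHom A H.subtype).obj X))
    rw [← hα X]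
    exact epi_comp _ _
  · intro X
    haveI := hiG X
    haveI : IsIso (β X) := ⟨α X, hβα X, hαβ X⟩
    show Mono (iH.app ((resHom A H.subtype).obj X) ≫ rmap adjCoinvH adjCoinvG X)
    rw [hβi X]
    exact mono_comp _ _
end

section
/- Let k be a splitting field for the finite group G and let M, N be indecomposable finite-dimensional kG-modules. If the images of M and N in the semisimplification of Rep_k G (the quotient by the ideal of negligible morphisms) are isomorphic and nonzero, then M ≅ N. -/
open CategoryTheory

universe u

/-- A morphism `f : M ⟶ N` of finite dimensional `G`-representations is negligible if
`tr (f ≫ g) = 0` for every `g : N ⟶ M`.  The semisimplification of `Rep_k G` is the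
quotient of `FDRep k G` by the tensor ideal of negligible morphisms; the image of an
object `M` in the semisimplification is zero iff `𝟙 M` is negligible, and the images of
`M` and `N` are isomorphic via `f`, `g` iff `f ≫ g - 𝟙 M` and `g ≫ f - 𝟙 N` are
negligible. -/
def Negligible {k G : Type u} [Field k] [Monoid G] {M N : FDRep k G} (f : M ⟶ N) : Prop :=
  ∀ g : N ⟶ M, LinearMap.trace k M ((f ≫ g).hom.hom.hom) = 0

/-- An object of `FDRep k G` is indecomposable if it is nonzero and has no nontrivial
idempotent endomorphisms. -/
def Indec {k G : Type u} [Field k] [Monoid G] (M : FDRep k G) : Prop :=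
  ¬ Limits.IsZero M ∧ ∀ f : M ⟶ M, f ≫ f = f → f = 0 ∨ f = 𝟙 M

/-- `k` is a splitting field for `G`: every indecomposable `kG`-module is absolutely
indecomposable, i.e. the endomorphism algebra of every indecomposable is local with
residue field `k` (every endomorphism is a scalar plus a non-unit). -/
def IsSplittingFieldFor (k G : Type u) [Field k] [Monoid G] : Prop :=
  ∀ M : FDRep k G, Indec M →
    ∀ f : CategoryTheory.End M, ∃ c : k, ¬ IsUnit (f - algebraMap k (CategoryTheory.End M) c)

open Polynomial in
private lemma aux_aeval_unit {k A : Type u} [Field k] [Ring A] [Algebra k A] (a : A) (r : k[X])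
    (h : aeval a (X * r) = 1) : IsUnit a := by
  have h1 : aeval a (X * r) = a * aeval a r := by rw [map_mul, aeval_X]
  have h2 : aeval a (X * r) = aeval a r * a := by rw [mul_comm X r, map_mul, aeval_X]
  exact ⟨⟨a, aeval a r, h1.symm.trans h, h2.symm.trans h⟩, rfl⟩

open Polynomial in
/-- In a finite-dimensional algebra with no nontrivial idempotents, every element is a
unit or nilpotent. -/
private lemma aux_dichotomy {k A : Type u} [Field k] [Ring A] [Algebra k A]
    [FiniteDimensional k A]
    (hid : ∀ e : A, e * e = e → e = 0 ∨ e = 1) (a : A) : IsUnit a ∨ IsNilpotent a := by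
  have hint : IsIntegral k a := Algebra.IsIntegral.isIntegral a
  set p := minpoly k a with hp
  have hp0 : p ≠ 0 := minpoly.ne_zero hint
  have haev : aeval a p = 0 := minpoly.aeval k a
  obtain ⟨q, hq, hnd⟩ := p.exists_eq_pow_rootMultiplicity_mul_and_not_dvd hp0 0
  rw [map_zero, sub_zero] at hq hnd
  set m := p.rootMultiplicity 0 with hm
  rcases Nat.eq_zero_or_pos m with hm0 | hmpos
  · -- `X ∤ p` so the constant coefficient is nonzero and `a` is a unit
    left
    have hXp : ¬ (X : k[X]) ∣ p := by rw [hq, hm0, pow_zero, one_mul]; exact hnd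
    have hc0 : p.coeff 0 ≠ 0 := by rwa [X_dvd_iff] at hXp
    have hsplitp : p = X * p.divX + C (p.coeff 0) := (X_mul_divX_add p).symm
    refine aux_aeval_unit a (-(C (p.coeff 0)⁻¹) * p.divX) ?_
    have hXr : X * (-(C (p.coeff 0)⁻¹) * p.divX)
        = -(C (p.coeff 0)⁻¹) * (p - C (p.coeff 0)) := by
      linear_combination (C (p.coeff 0)⁻¹) * hsplitp
    rw [hXr, map_mul, map_neg, aeval_C, map_sub, haev, aeval_C, zero_sub, neg_mul_neg,
      ← map_mul, inv_mul_cancel₀ hc0, map_one]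
  · have hcop : IsCoprime ((X : k[X]) ^ m) q :=
      ((irreducible_X.coprime_iff_not_dvd).mpr hnd).pow_left
    obtain ⟨s, t, hst⟩ := hcop
    have hEE : (s * X ^ m) * (s * X ^ m) = s * X ^ m - s * t * p := by
      linear_combination (s * X ^ m) * hst + (s * t) * hq
    have hee : aeval a (s * X ^ m) * aeval a (s * X ^ m) = aeval a (s * X ^ m) := by
      rw [← map_mul, hEE, map_sub, map_mul, map_mul, haev, mul_zero, sub_zero]
    rcases hid _ hee with he0 | he1
    · right
      have h := congrArg (aeval a) hst
      rw [map_add, map_one, he0, zero_add] at h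
      refine ⟨m, ?_⟩
      calc a ^ m = aeval a (X ^ m) * aeval a (t * q) := by
            rw [h, mul_one, map_pow, aeval_X]
        _ = aeval a (X ^ m * (t * q)) := (map_mul _ _ _).symm
        _ = aeval a (t * p) := by
            rw [show (X : k[X]) ^ m * (t * q) = t * p by linear_combination (-t) * hq]
        _ = 0 := by rw [map_mul, haev, mul_zero]
    · left
      obtain ⟨m', hm'⟩ : ∃ m', m = m' + 1 := ⟨m - 1, by omega⟩
      refine aux_aeval_unit a (s * X ^ m') ?_
      rw [show (X : k[X]) * (s * X ^ m') = s * X ^ m by rw [hm', pow_succ]; ring]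
      exact he1

/-- In a ring with no nontrivial idempotents, nonunits absorb multiplication. -/
private lemma aux_mul_not_isUnit {A : Type u} [Ring A]
    (hid : ∀ e : A, e * e = e → e = 0 ∨ e = 1) {u : A} (hu : ¬ IsUnit u) (h : A) :
    ¬ IsUnit (h * u) := by
  intro hw
  obtain ⟨w, hwe⟩ := hw
  have hb : (↑w⁻¹ * h) * u = 1 := by rw [mul_assoc, ← hwe, Units.inv_mul]
  set b := (↑w⁻¹ : A) * h with hbdef
  have hee : (u * b) * (u * b) = u * b := by
    calc (u * b) * (u * b) = u * ((b * u) * b) := by noncomm_ring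
      _ = u * b := by rw [hb, one_mul]
  rcases hid _ hee with he0 | he1
  · have h10 : (1 : A) = 0 := by
      calc (1 : A) = (b * u) * (b * u) := by rw [hb, one_mul]
        _ = b * ((u * b) * u) := by noncomm_ring
        _ = 0 := by rw [he0, zero_mul, mul_zero]
    have : Subsingleton A := subsingleton_of_zero_eq_one h10.symm
    exact hu ((Subsingleton.elim u 1) ▸ isUnit_one)
  · exact hu ⟨⟨u, b, he1, hb⟩, rfl⟩

/-- Sending an endomorphism of `M` in `FDRep k G` to its underlying linear map is a
ring homomorphism. -/
private def auxHomRingHom {k G : Type u} [Field k] [Group G] (M : FDRep k G) :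
    CategoryTheory.End M →+* Module.End k M where
  toFun v := v.hom.hom.hom
  map_one' := rfl
  map_mul' _ _ := rfl
  map_zero' := rfl
  map_add' _ _ := rfl

/-- A non-invertible endomorphism of an indecomposable object of `FDRep k G` is
nilpotent, hence has trace zero. -/
private lemma aux_trace_eq_zero_of_not_isUnit {k G : Type u} [Field k] [Group G]
    (M : FDRep k G)
    (hid : ∀ e : CategoryTheory.End M, e * e = e → e = 0 ∨ e = 1)
    {v : CategoryTheory.End M} (hv : ¬ IsUnit v) :
    LinearMap.trace k M v.hom.hom.hom = 0 := by
  have : FiniteDimensional k (CategoryTheory.End M) :=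
    inferInstanceAs (FiniteDimensional k (M ⟶ M))
  rcases aux_dichotomy (k := k) hid v with h | h
  · exact absurd h hv
  · have hn : IsNilpotent ((auxHomRingHom M) v) := h.map (auxHomRingHom M)
    have := LinearMap.isNilpotent_trace_of_isNilpotent
      (f := ((auxHomRingHom M) v : Module.End k M)) hn
    exact isNilpotent_iff_eq_zero.mp this

/-- Let `k` be a splitting field for the finite group `G` and `M`, `N` indecomposable
finite-dimensional `kG`-modules.  If the images of `M` and `N` in the semisimplification
of `Rep_k G` are isomorphic (via morphisms `f`, `g` that are mutually inverse modulo
negligible morphisms) and nonzero, then `M ≅ N`. -/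
theorem stmt_10 {k G : Type u} [Field k] [Group G] [Finite G]
    (hsplit : IsSplittingFieldFor k G)
    (M N : FDRep k G) (hM : Indec M) (hN : Indec N)
    (f : M ⟶ N) (g : N ⟶ M)
    (hfg : Negligible (f ≫ g - 𝟙 M)) (hgf : Negligible (g ≫ f - 𝟙 N))
    (hMnz : ¬ Negligible (𝟙 M)) :
    Nonempty (M ≅ N) := by
  have hid : ∀ e : CategoryTheory.End M, e * e = e → e = 0 ∨ e = 1 := by
    intro e he
    rw [End.mul_def] at he
    rcases hM.2 e he with h | h
    · exact Or.inl h
    · exact Or.inr (h.trans (End.one_def (X := M)).symm)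
  -- extract an endomorphism of `M` with nonzero trace
  unfold Negligible at hMnz
  push_neg at hMnz
  obtain ⟨h₀, hh₀⟩ := hMnz
  rw [Category.id_comp] at hh₀
  -- the trace identity coming from negligibility of `f ≫ g - 𝟙 M`
  have key : ∀ h : M ⟶ M, LinearMap.trace k M (((f ≫ g) ≫ h).hom.hom.hom)
      = LinearMap.trace k M h.hom.hom.hom := by
    intro h
    have := hfg h
    rw [Preadditive.sub_comp, Category.id_comp, sub_eq_add_neg, Action.add_hom,
      Action.neg_hom] at this
    have h2 : LinearMap.trace k M (((f ≫ g) ≫ h).hom.hom.hom + -h.hom.hom.hom) = 0 := this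
    rw [map_add, map_neg] at h2
    linear_combination h2
  -- `f ≫ g` is a unit in `End M`
  have hw : IsUnit (show CategoryTheory.End M from f ≫ g) := by
    by_contra hw
    have : ∀ h : M ⟶ M, LinearMap.trace k M h.hom.hom.hom = 0 := by
      intro h
      rw [← key h]
      exact aux_trace_eq_zero_of_not_isUnit M hid (aux_mul_not_isUnit hid hw h)
    exact hh₀ (this h₀)
  obtain ⟨⟨w0, wi, hwi1, hwi2⟩, hw0⟩ := hw
  rw [End.mul_def] at hwi1 hwi2
  subst hw0
  have hfg' : f ≫ (g ≫ wi) = 𝟙 M := by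
    rw [← Category.assoc]
    exact hwi2.trans (End.one_def (X := M))
  have he : ((g ≫ wi) ≫ f) ≫ ((g ≫ wi) ≫ f) = (g ≫ wi) ≫ f := by
    calc ((g ≫ wi) ≫ f) ≫ ((g ≫ wi) ≫ f) = (g ≫ wi) ≫ (f ≫ (g ≫ wi)) ≫ f := by
          simp only [Category.assoc]
      _ = (g ≫ wi) ≫ f := by rw [hfg', Category.id_comp]
  rcases hN.2 _ he with h | h
  · exfalso
    have hid0 : 𝟙 M = 0 := by
      calc 𝟙 M = (f ≫ (g ≫ wi)) ≫ (f ≫ (g ≫ wi)) := by rw [hfg', Category.id_comp]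
        _ = f ≫ (((g ≫ wi) ≫ f) ≫ (g ≫ wi)) := by simp only [Category.assoc]
        _ = 0 := by rw [h, Limits.zero_comp, Limits.comp_zero]
    have : h₀ = 0 := by rw [← Category.id_comp h₀, hid0, Limits.zero_comp]
    rw [this, Action.zero_hom] at hh₀
    exact hh₀ (map_zero (LinearMap.trace k M))
  · exact ⟨⟨f, g ≫ wi, hfg', h⟩⟩
end

section
/- Let k be a splitting field for the finite group G of characteristic p > 0, and M an indecomposable finite-dimensional kG-module. Then the image of M in the semisimplification of Rep_k G is zero if and only if p divides dim_k M. -/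
open CategoryTheory

universe u

open Polynomial in
/-- In an algebra whose only idempotents are `0` and `1`, an integral non-unit is
nilpotent. -/
lemma aux_nilp {k A : Type*} [Field k] [Ring A] [Algebra k A] (f : A)
    (hint : IsIntegral k f) (hfu : ¬ IsUnit f)
    (hidem : ∀ e : A, e * e = e → e = 0 ∨ e = 1) : IsNilpotent f := by
  classical
  set m := minpoly k f with hm
  have hm0 : m ≠ 0 := minpoly.ne_zero hint
  have haev : Polynomial.aeval f m = 0 := minpoly.aeval k f
  have hc0 : m.coeff 0 = 0 := by
    by_contra hc
    apply hfu
    have h1 : X * m.divX + C (m.coeff 0) = m := X_mul_divX_add m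
    have hcomm : Commute f (Polynomial.aeval f m.divX) := by
      simpa only [Polynomial.aeval_X] using
        (Commute.all (X : k[X]) m.divX).map (Polynomial.aeval f)
    set b := Polynomial.aeval f m.divX with hb
    have h2 : f * b + (m.coeff 0) • (1 : A) = 0 := by
      have h3 := congrArg (Polynomial.aeval f) h1
      rwa [map_add, map_mul, Polynomial.aeval_X, Polynomial.aeval_C, haev,
        Algebra.algebraMap_eq_smul_one] at h3
    have h4 : f * b = -((m.coeff 0) • (1 : A)) := eq_neg_of_add_eq_zero_left h2
    have h5 : f * ((-(m.coeff 0)⁻¹) • b) = 1 := by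
      rw [mul_smul_comm, h4, neg_smul_neg, smul_smul, inv_mul_cancel₀ hc, one_smul]
    refine isUnit_iff_exists.mpr ⟨(-(m.coeff 0)⁻¹) • b, h5, ?_⟩
    have h6 : ((-(m.coeff 0)⁻¹) • b) * f = f * ((-(m.coeff 0)⁻¹) • b) := by
      rw [smul_mul_assoc, mul_smul_comm, hcomm.eq]
    rw [h6, h5]
  have hroot : m.IsRoot 0 := by
    rwa [Polynomial.IsRoot, ← Polynomial.coeff_zero_eq_eval_zero]
  set a := m.rootMultiplicity 0 with ha'
  have ha : 0 < a := (Polynomial.rootMultiplicity_pos hm0).mpr hroot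
  obtain ⟨q, hq, hnd⟩ := m.exists_eq_pow_rootMultiplicity_mul_and_not_dvd hm0 0
  rw [map_zero, sub_zero] at hq hnd
  rw [← ha'] at hq
  have hcop : IsCoprime ((X : k[X]) ^ a) q :=
    ((Polynomial.irreducible_X.coprime_iff_not_dvd).mpr hnd).pow_left
  obtain ⟨u, v, huv⟩ := hcop
  set e := Polynomial.aeval f (v * q) with he'
  have hsum : Polynomial.aeval f (u * X ^ a) + e = 1 := by
    rw [he', ← map_add, huv, map_one]
  have he : e * e = e := by
    have h1 : e * Polynomial.aeval f (u * X ^ a) = 0 := by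
      rw [he', ← map_mul]
      have hvq : (v * q) * (u * X ^ a) = (v * u) * m := by rw [hq]; ring
      rw [hvq, map_mul, haev, mul_zero]
    have h2 := congrArg (e * ·) hsum
    simp only [mul_add, mul_one] at h2
    rw [h1, zero_add] at h2
    exact h2
  rcases hidem e he with h0 | h1
  · exfalso; apply hfu
    have h2 : Polynomial.aeval f (u * X ^ a) = 1 := by
      rw [h0, add_zero] at hsum; exact hsum
    have hXa : (X : k[X]) * (u * X ^ (a - 1)) = u * X ^ a := by
      rw [mul_left_comm, ← pow_succ', Nat.sub_add_cancel ha]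
    have key : f * Polynomial.aeval f (u * X ^ (a - 1)) = 1 := by
      have h3 : Polynomial.aeval f (X * (u * X ^ (a - 1))) = 1 := by rw [hXa, h2]
      rwa [map_mul, Polynomial.aeval_X] at h3
    refine isUnit_iff_exists.mpr ⟨_, key, ?_⟩
    have hcomm : Commute f (Polynomial.aeval f (u * X ^ (a - 1))) := by
      simpa only [Polynomial.aeval_X] using
        (Commute.all (X : k[X]) (u * X ^ (a - 1))).map (Polynomial.aeval f)
    rw [← hcomm.eq, key]
  · refine ⟨a, ?_⟩
    calc f ^ a = f ^ a * e := by rw [h1, mul_one]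
      _ = Polynomial.aeval f (X ^ a * (v * q)) := by
          rw [map_mul, map_pow, Polynomial.aeval_X, he']
      _ = Polynomial.aeval f (v * m) := by
          congr 1; rw [hq]; ring
      _ = 0 := by rw [map_mul, haev, mul_zero]

/-- Let `k` be a splitting field of characteristic `p > 0` for the finite group `G`, and
`M` an indecomposable finite-dimensional `kG`-module.  Then the image of `M` in the
semisimplification of `Rep_k G` is zero (i.e. `𝟙 M` is negligible) if and only if `p`
divides `dim_k M`. -/
theorem stmt_11 {k G : Type u} [Field k] [Group G] [Finite G]
    (p : ℕ) [CharP k p] (hp : p ≠ 0)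
    (hsplit : IsSplittingFieldFor k G)
    (M : FDRep k G) (hM : Indec M) :
    Negligible (𝟙 M) ↔ p ∣ Module.finrank k M := by
  haveI : Module.Finite k (CategoryTheory.End M) :=
    inferInstanceAs (Module.Finite k (M ⟶ M))
  constructor
  · intro hneg
    have h := hneg (𝟙 M)
    rw [Category.id_comp] at h
    have h2 : ((𝟙 M : M ⟶ M).hom.hom.hom : M →ₗ[k] M) = LinearMap.id := rfl
    rw [h2, LinearMap.trace_id] at h
    exact (CharP.cast_eq_zero_iff k p _).mp h
  · intro hdvd g
    rw [Category.id_comp]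
    let g' : CategoryTheory.End M := g
    obtain ⟨c, hc⟩ := hsplit M hM g'
    set f : CategoryTheory.End M := g' - algebraMap k _ c with hf
    have hnil : IsNilpotent f :=
      aux_nilp f (IsIntegral.of_finite k f) hc (fun e hee => hM.2 e hee)
    set F : (M →ₗ[k] M) := (Action.Hom.hom f).hom.hom with hF
    have hmul : ∀ x y : CategoryTheory.End M,
        ((Action.Hom.hom (x * y)).hom.hom : M →ₗ[k] M) = (Action.Hom.hom x).hom.hom ∘ₗ (Action.Hom.hom y).hom.hom :=
      fun _ _ => rfl
    have hpow : ∀ n : ℕ, ((Action.Hom.hom (f ^ n)).hom.hom : M →ₗ[k] M) = F ^ n := by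
      intro n
      induction n with
      | zero => rfl
      | succ n ih => rw [pow_succ, pow_succ, hmul, ih]; rfl
    have hnilF : IsNilpotent F := by
      obtain ⟨n, hn⟩ := hnil
      exact ⟨n, by rw [← hpow, hn]; rfl⟩
    have htrF : LinearMap.trace k M F = 0 :=
      (LinearMap.isNilpotent_trace_of_isNilpotent hnilF).eq_zero
    have hg : (g.hom.hom.hom : M →ₗ[k] M) = F + c • LinearMap.id := by
      have h1 : g' = f + algebraMap k (CategoryTheory.End M) c := by
        rw [hf]; exact (sub_add_cancel _ _).symm
      have h2 := congrArg (fun x : M ⟶ M => (Action.Hom.hom x).hom.hom) h1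
      have h3 : (algebraMap k (CategoryTheory.End M) c) = c • 𝟙 M := rfl
      rw [h3] at h2
      have h4 : ∀ x y : M ⟶ M, ((Action.Hom.hom (x + y)).hom.hom : M →ₗ[k] M) = x.hom.hom.hom + y.hom.hom.hom := by
        intro x y; rfl
      have h5 : ((Action.Hom.hom (c • 𝟙 M : M ⟶ M)).hom.hom : M →ₗ[k] M) = c • LinearMap.id := by
        simp; rfl
      show ((Action.Hom.hom g').hom.hom : M →ₗ[k] M) = _
      rw [h2]
      exact (h4 f _).trans (by rw [h5, hF])
    rw [hg, map_add, htrF, zero_add, map_smul, LinearMap.trace_id,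
      (CharP.cast_eq_zero_iff k p _).mpr hdvd, smul_zero]
end
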